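/- Define T(s) = (4/(1-s)²)·(Γ(1+s)/Γ(1-s))³·(Γ(1-2s)/Γ(1+2s))·(Γ(3/2-s/2)/Γ(1/2+s/2))². Then T(0) = 1 and for all s ∈ [0, 1/38], T(s) ≤ 1 + (7/2)s. -/

import Mathlib

set_option maxHeartbeats 1000000

open Real

noncomputable def T (s : ℝ) : ℝ :=
  4 / (1 - s) ^ 2 * (Real.Gamma (1 + s) / Real.Gamma (1 - s)) ^ 3 *
    (Real.Gamma (1 - 2 * s) / Real.Gamma (1 + 2 * s)) *
    (Real.Gamma (3 / 2 - s / 2) / Real.Gamma (1 / 2 + s / 2)) ^ 2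

lemma gamma_superadd {s : ℝ} (hs : 0 < s) :
    Real.Gamma (1 + s) * Real.Gamma (1 + s / 2) ^ 2 ≤ Real.Gamma (1 + 2 * s) := by
  have hc := Real.convexOn_log_Gamma
  have h1m : (1 : ℝ) ∈ Set.Ioi (0:ℝ) := by norm_num
  have h2m : (1 + 2 * s) ∈ Set.Ioi (0:ℝ) := by simp; linarith
  have h1 := hc.2 h1m h2m (by norm_num : (0:ℝ) ≤ 1/2) (by norm_num : (0:ℝ) ≤ 1/2) (by norm_num)
  have h2 := hc.2 h1m h2m (by norm_num : (0:ℝ) ≤ 3/4) (by norm_num : (0:ℝ) ≤ 1/4) (by norm_num)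
  simp only [smul_eq_mul, Function.comp_apply] at h1 h2
  rw [show (1:ℝ)/2 * 1 + 1/2 * (1 + 2*s) = 1 + s by ring] at h1
  rw [show (3:ℝ)/4 * 1 + 1/4 * (1 + 2*s) = 1 + s/2 by ring] at h2
  rw [Real.Gamma_one, Real.log_one] at h1 h2
  have ha : 0 < Gamma (1 + s) := Gamma_pos_of_pos (by linarith)
  have hb : 0 < Gamma (1 + s/2) := Gamma_pos_of_pos (by linarith)
  have hcpos : 0 < Gamma (1 + 2*s) := Gamma_pos_of_pos (by linarith)
  have hlog : Real.log (Gamma (1 + s) * Gamma (1 + s / 2) ^ 2) ≤ Real.log (Gamma (1 + 2*s)) := by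
    rw [Real.log_mul ha.ne' (by positivity), Real.log_pow]
    push_cast
    linarith
  calc Gamma (1 + s) * Gamma (1 + s / 2) ^ 2
      = Real.exp (Real.log (Gamma (1 + s) * Gamma (1 + s / 2) ^ 2)) :=
        (Real.exp_log (by positivity)).symm
    _ ≤ Real.exp (Real.log (Gamma (1 + 2*s))) := Real.exp_le_exp.2 hlog
    _ = Gamma (1 + 2*s) := Real.exp_log hcpos

lemma T_zero : T 0 = 1 := by
  have h : Real.Gamma (3/2) = (1/2) * Real.Gamma (1/2) := by
    rw [show (3:ℝ)/2 = 1/2 + 1 by norm_num]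
    exact Real.Gamma_add_one (by norm_num)
  have h2 : Real.Gamma (1/2) ≠ 0 := (Gamma_pos_of_pos (by norm_num)).ne'
  unfold T
  norm_num [Real.Gamma_one, h]
  field_simp
  ring

lemma T_identity {s : ℝ} (hs : 0 < s) (hs38 : s ≤ 1/38) :
    T s = (Real.Gamma (1+s) * Real.Gamma (1+s/2)^2 / Real.Gamma (1+2*s))^2 *
      (Real.sin (π*s))^2 / (((2:ℝ)^(-s))^4 * (π*s)^2 * Real.cos (π*s) * Real.cos (π*s/2)^2) := by
  have hpi := Real.pi_gt_three
  have hpi2 := Real.pi_lt_d2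
  have ha : 0 < Gamma (1 + s) := Gamma_pos_of_pos (by linarith)
  have hb : 0 < Gamma (1 + s/2) := Gamma_pos_of_pos (by linarith)
  have hcpos : 0 < Gamma (1 + 2*s) := Gamma_pos_of_pos (by linarith)
  have hsin : 0 < Real.sin (π*s) := Real.sin_pos_of_pos_of_lt_pi (by positivity) (by nlinarith)
  have hcos : 0 < Real.cos (π*s) := Real.cos_pos_of_mem_Ioo ⟨by nlinarith, by nlinarith⟩
  have hcos2 : 0 < Real.cos (π*s/2) := Real.cos_pos_of_mem_Ioo ⟨by nlinarith, by nlinarith⟩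
  have hq : (0:ℝ) < (2:ℝ)^(-s) := Real.rpow_pos_of_pos (by norm_num) _
  have hsqpi : (0:ℝ) < Real.sqrt π := Real.sqrt_pos.2 Real.pi_pos
  have hGs : Gamma (1+s) = s * Gamma s := by
    rw [show (1:ℝ)+s = s+1 by ring]; exact Real.Gamma_add_one hs.ne'
  have v1 : Gamma (1-s) = π * s / (Real.sin (π*s) * Gamma (1+s)) := by
    have h := Real.Gamma_mul_Gamma_one_sub s
    rw [hGs]
    field_simp
    field_simp at h
    linear_combination h
  have hGc : Gamma (1+2*s) = (2*s) * Gamma (2*s) := by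
    rw [show (1:ℝ)+2*s = 2*s+1 by ring]; exact Real.Gamma_add_one (by positivity)
  have v2 : Gamma (1-2*s) = π * s / (Real.sin (π*s) * Real.cos (π*s) * Gamma (1+2*s)) := by
    have h := Real.Gamma_mul_Gamma_one_sub (2*s)
    rw [show (1:ℝ)-2*s = 1-2*s by ring, show π*(2*s) = 2*(π*s) by ring, Real.sin_two_mul] at h
    rw [hGc]
    field_simp
    field_simp at h
    linear_combination h
  have v3 : Gamma (1/2+s/2) = Gamma (1+s) * (2:ℝ)^(-s) * Real.sqrt π / Gamma (1+s/2) := by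
    have h := Real.Gamma_mul_Gamma_add_half (1/2+s/2)
    rw [show (1:ℝ)/2+s/2+1/2 = 1+s/2 by ring, show 2*((1:ℝ)/2+s/2) = 1+s by ring,
      show (1:ℝ)-(1+s) = -s by ring] at h
    rw [eq_div_iff hb.ne']
    linear_combination h
  have v4 : Gamma (1/2-s/2) =
      π * Gamma (1+s/2) / (Real.cos (π*s/2) * (Gamma (1+s) * (2:ℝ)^(-s) * Real.sqrt π)) := by
    have h := Real.Gamma_mul_Gamma_one_sub (1/2+s/2)
    rw [show (1:ℝ)-(1/2+s/2) = 1/2-s/2 by ring, show π*((1:ℝ)/2+s/2) = π/2 - (-(π*s/2)) by ring,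
      Real.sin_pi_div_two_sub, Real.cos_neg, v3] at h
    field_simp at h ⊢
    linear_combination h
  have v5 : Gamma (3/2-s/2) = (1/2-s/2) * Gamma (1/2-s/2) := by
    rw [show (3:ℝ)/2-s/2 = (1/2-s/2)+1 by ring]
    exact Real.Gamma_add_one (by norm_num; linarith)
  unfold T
  rw [v1, v2, v5, v4, v3]
  have hsq : Real.sqrt π ^ 2 = π := Real.sq_sqrt Real.pi_pos.le
  have h1s : (1:ℝ) - s ≠ 0 := by linarith
  have h1s2 : (1:ℝ)/2 - s/2 ≠ 0 := by norm_num; linarith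
  field_simp
  ring_nf
  rw [show Real.sqrt π ^ 4 = π^2 by rw [show Real.sqrt π ^4 = (Real.sqrt π ^2)^2 by ring, hsq]]
  ring


lemma pis_sq_bound {s : ℝ} (hpos : 0 < s) (hs38 : s ≤ 1/38) : (π*s)^2 ≤ 0.27 * s := by
  have hpi2 := Real.pi_lt_d2
  have hpi := Real.pi_gt_three
  have hp2 : π^2 ≤ 9.9225 := by nlinarith
  have hs2 : s^2 ≤ s/38 := by nlinarith
  have h3 : π^2 * s^2 ≤ 9.9225 * s^2 := mul_le_mul_of_nonneg_right hp2 (sq_nonneg s)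
  nlinarith

lemma cos_lb1 {s : ℝ} (hpos : 0 < s) (hs38 : s ≤ 1/38) : 1 - 0.14*s ≤ Real.cos (π*s) := by
  have h := Real.one_sub_sq_div_two_le_cos (x := π*s)
  have h2 := pis_sq_bound hpos hs38
  linarith

lemma cos_lb2 {s : ℝ} (hpos : 0 < s) (hs38 : s ≤ 1/38) : 1 - 0.04*s ≤ Real.cos (π*s/2) := by
  have h := Real.one_sub_sq_div_two_le_cos (x := π*s/2)
  have h2 := pis_sq_bound hpos hs38
  nlinarith [sq_nonneg (π*s)]

lemma final_numeric {s x c1 c2 : ℝ} (hpos : 0 < s) (hs38 : s ≤ 1/38)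
    (hx0 : 0 ≤ x) (hxle : x ≤ 2.7725887232 * s)
    (hc1 : 1 - 0.14*s ≤ c1) (hc2 : 1 - 0.04*s ≤ c2)
    (hc1p : 0 < c1) (hc2p : 0 < c2) :
    1 ≤ (1-x) * ((1 + 7/2*s) * (c1*c2^2)) := by
  have hx1 : (0:ℝ) < 1 - x := by nlinarith
  have hc2n : (0:ℝ) ≤ 1 - 0.04*s := by linarith
  have hc2sq : (1-0.04*s)^2 ≤ c2^2 := by nlinarith
  have hA : 1 + 0.4*s ≤ (1 + 7/2*s) * (1-x) := by nlinarith
  have hB : 1 - 0.23*s ≤ c1 * c2^2 := by nlinarith [sq_nonneg s]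
  have hBpos : (0:ℝ) < 1 - 0.23*s := by linarith
  have h2 : (1+0.4*s) * (1-0.23*s) ≤ ((1 + 7/2*s)*(1-x)) * (c1*c2^2) :=
    mul_le_mul hA hB hBpos.le (by nlinarith)
  nlinarith [h2]

theorem T_bound : T 0 = 1 ∧ ∀ s ∈ Set.Icc (0 : ℝ) (1 / 38), T s ≤ 1 + 7 / 2 * s := by
  refine ⟨T_zero, fun s hs => ?_⟩
  obtain ⟨hs0, hs38⟩ := hs
  rcases eq_or_lt_of_le hs0 with h0 | hpos
  · rw [← h0, T_zero]; norm_num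
  have hpi := Real.pi_gt_three
  have hpi2 := Real.pi_lt_d2
  have ha : 0 < Gamma (1 + s) := Gamma_pos_of_pos (by linarith)
  have hb : 0 < Gamma (1 + s/2) := Gamma_pos_of_pos (by linarith)
  have hcpos : 0 < Gamma (1 + 2*s) := Gamma_pos_of_pos (by linarith)
  have hsin : 0 < Real.sin (π*s) := Real.sin_pos_of_pos_of_lt_pi (by positivity) (by nlinarith)
  have hcos : 0 < Real.cos (π*s) := Real.cos_pos_of_mem_Ioo ⟨by nlinarith, by nlinarith⟩
  have hcos2 : 0 < Real.cos (π*s/2) := Real.cos_pos_of_mem_Ioo ⟨by nlinarith, by nlinarith⟩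
  have hq : (0:ℝ) < (2:ℝ)^(-s) := Real.rpow_pos_of_pos (by norm_num) _
  have hratio : Gamma (1+s) * Gamma (1+s/2)^2 / Gamma (1+2*s) ≤ 1 :=
    (div_le_one hcpos).2 (gamma_superadd hpos)
  have hratio0 : 0 ≤ Gamma (1+s) * Gamma (1+s/2)^2 / Gamma (1+2*s) := by positivity
  have hsinle : Real.sin (π*s) ≤ π*s := (Real.sin_lt (by positivity)).le
  -- step 1 : T s ≤ 1 / (q^4 * cos * cos2^2)
  have step1 : T s ≤ 1 / (((2:ℝ)^(-s))^4 * Real.cos (π*s) * Real.cos (π*s/2)^2) := by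
    rw [T_identity hpos hs38]
    have h1 : (Real.Gamma (1+s) * Real.Gamma (1+s/2)^2 / Real.Gamma (1+2*s))^2 *
        (Real.sin (π*s))^2 ≤ 1 * (π*s)^2 := by
      apply mul_le_mul
      · nlinarith
      · nlinarith
      · positivity
      · norm_num
    rw [div_le_div_iff₀ (by positivity) (by positivity)]
    calc (Real.Gamma (1+s) * Real.Gamma (1+s/2)^2 / Real.Gamma (1+2*s))^2 * (Real.sin (π*s))^2 *
          (((2:ℝ)^(-s))^4 * Real.cos (π*s) * Real.cos (π*s/2)^2)
        ≤ 1 * (π*s)^2 * (((2:ℝ)^(-s))^4 * Real.cos (π*s) * Real.cos (π*s/2)^2) := by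
          apply mul_le_mul_of_nonneg_right h1 (by positivity)
      _ = 1 * (((2:ℝ)^(-s))^4 * (π*s)^2 * Real.cos (π*s) * Real.cos (π*s/2)^2) := by ring
  -- step 2 : rewrite q^4 as exp
  have hq4 : ((2:ℝ)^(-s))^4 = Real.exp (-(4*(Real.log 2 * s))) := by
    rw [Real.rpow_def_of_pos (by norm_num : (0:ℝ) < 2), ← Real.exp_nat_mul]
    norm_num
  set x : ℝ := 4*(Real.log 2 * s) with hxdef
  clear_value x
  have hlog2u := Real.log_two_lt_d9
  have hlog2l := Real.log_two_gt_d9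
  have hx0 : 0 ≤ x := by
    have h2 : (0:ℝ) < Real.log 2 := Real.log_pos (by norm_num)
    rw [hxdef]; positivity
  have hxle : x ≤ 2.7725887232 * s := by
    rw [hxdef]; nlinarith
  have hx1 : x < 1 := by nlinarith
  have hexp : Real.exp x ≤ 1/(1-x) := Real.exp_bound_div_one_sub_of_interval hx0 hx1
  have step2 : T s ≤ Real.exp x / (Real.cos (π*s) * Real.cos (π*s/2)^2) := by
    calc T s ≤ 1 / (((2:ℝ)^(-s))^4 * Real.cos (π*s) * Real.cos (π*s/2)^2) := step1
      _ = Real.exp x / (Real.cos (π*s) * Real.cos (π*s/2)^2) := by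
          rw [hq4, Real.exp_neg]
          field_simp
  -- final numeric bound
  have hc1' : 1 - 0.14*s ≤ Real.cos (π*s) := cos_lb1 hpos hs38
  have hc2' : 1 - 0.04*s ≤ Real.cos (π*s/2) := cos_lb2 hpos hs38
  have hfin : 1 ≤ (1-x) * ((1 + 7/2*s) * (Real.cos (π*s) * Real.cos (π*s/2)^2)) :=
    final_numeric hpos hs38 hx0 hxle hc1' hc2' hcos hcos2
  calc T s ≤ Real.exp x / (Real.cos (π*s) * Real.cos (π*s/2)^2) := step2
    _ ≤ (1/(1-x)) / (Real.cos (π*s) * Real.cos (π*s/2)^2) := by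
        have hD : (0:ℝ) < Real.cos (π*s) * Real.cos (π*s/2)^2 := mul_pos hcos (pow_pos hcos2 2)
        exact (div_le_div_iff_of_pos_right hD).2 hexp
    _ ≤ 1 + 7/2*s := by
        have hD : (0:ℝ) < Real.cos (π*s) * Real.cos (π*s/2)^2 := mul_pos hcos (pow_pos hcos2 2)
        have hx1 : (0:ℝ) < 1 - x := by nlinarith
        rw [div_div, div_le_iff₀ (by positivity)]
        nlinarith [hfin]
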